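/- Let A be a C*-algebra, Δ : A → A a 2-local derivation, and f a bounded linear functional on A. Then the restriction of f ∘ Δ to the set of projections of A is finitely additive: for orthogonal projections e₁, e₂ one has (f ∘ Δ)(e₁ + e₂) = (f ∘ Δ)(e₁) + (f ∘ Δ)(e₂). -/

import Mathlib

def IsDerivation {A : Type*} [Ring A] [Algebra ℂ A] (D : A → A) : Prop :=
  (∀ x y : A, D (x + y) = D x + D y) ∧ (∀ (c : ℂ) (x : A), D (c • x) = c • D x) ∧
  (∀ x y : A, D (x * y) = D x * y + x * D y)

def Is2LocalDerivation {A : Type*} [Ring A] [Algebra ℂ A] (Δ : A → A) : Prop :=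
  ∀ x y : A, ∃ D : A → A, IsDerivation D ∧ Δ x = D x ∧ Δ y = D y

section Aux

variable {A : Type*} [Ring A] [Algebra ℂ A]

lemma deriv_e1_eq (D : A → A) (hD : IsDerivation D)
    (e₁ e₂ : A) (h1 : e₁ * e₁ = e₁) (h2 : e₂ * e₂ = e₂)
    (h12 : e₁ * e₂ = 0) (h21 : e₂ * e₁ = 0) :
    D e₁ = e₁ * D (e₁ + e₂ + e₂) + D (e₁ + e₂ + e₂) * e₁
      - (e₁ * D (e₁ + e₂ + e₂) * e₂ + e₁ * D (e₁ + e₂ + e₂) * e₂)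
      - (e₂ * D (e₁ + e₂ + e₂) * e₁ + e₂ * D (e₁ + e₂ + e₂) * e₁) := by
  obtain ⟨hadd, _, hmul⟩ := hD
  set a := D e₁ with ha_def
  set b := D e₂ with hb_def
  have hD0 : D 0 = 0 := by
    have h := hadd 0 0
    rw [add_zero] at h
    exact (left_eq_add.mp h)
  have ha : a = a * e₁ + e₁ * a := by
    have h := hmul e₁ e₁; rw [h1] at h; exact h
  have h3 : e₁ * b = -(a * e₂) := by
    have h := hmul e₁ e₂; rw [h12, hD0] at h
    exact eq_neg_of_add_eq_zero_right h.symm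
  have h4 : b * e₁ = -(e₂ * a) := by
    have h := hmul e₂ e₁; rw [h21, hD0] at h
    exact eq_neg_of_add_eq_zero_left h.symm
  have hw : D (e₁ + e₂ + e₂) = a + b + b := by rw [hadd, hadd]
  have hA : a * e₂ = e₁ * (a * e₂) := by
    calc a * e₂ = (a * e₁ + e₁ * a) * e₂ := by rw [← ha]
      _ = a * (e₁ * e₂) + e₁ * (a * e₂) := by rw [add_mul, mul_assoc, mul_assoc]
      _ = e₁ * (a * e₂) := by rw [h12, mul_zero, zero_add]
  have hB : e₂ * a = e₂ * a * e₁ := by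
    calc e₂ * a = e₂ * (a * e₁ + e₁ * a) := by rw [← ha]
      _ = e₂ * a * e₁ + e₂ * e₁ * a := by
          rw [mul_add, ← mul_assoc, ← mul_assoc]
      _ = e₂ * a * e₁ := by rw [h21, zero_mul, add_zero]
  have U1 : e₁ * D (e₁ + e₂ + e₂) = e₁ * a + -(a * e₂) + -(a * e₂) := by
    rw [hw, mul_add, mul_add, h3]
  have U2 : D (e₁ + e₂ + e₂) * e₁ = a * e₁ + -(e₂ * a) + -(e₂ * a) := by
    rw [hw, add_mul, add_mul, h4]
  have U3 : e₁ * D (e₁ + e₂ + e₂) * e₂ = -(a * e₂) := by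
    rw [U1, add_mul, add_mul, mul_assoc e₁ a e₂, ← hA]
    simp only [neg_mul]
    rw [mul_assoc a e₂ e₂, h2]
    abel
  have U4 : e₂ * D (e₁ + e₂ + e₂) * e₁ = -(e₂ * a) := by
    rw [hw, mul_add, mul_add, add_mul, add_mul, mul_assoc e₂ b e₁, h4,
      mul_neg, ← mul_assoc, h2, ← hB]
    abel
  rw [U3, U4, U1, U2]
  conv_lhs => rw [ha]
  abel

lemma deriv_e2_eq (D : A → A) (hD : IsDerivation D)
    (e₁ e₂ : A) (h1 : e₁ * e₁ = e₁) (h2 : e₂ * e₂ = e₂)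
    (h12 : e₁ * e₂ = 0) (h21 : e₂ * e₁ = 0) :
    D e₂ = (2⁻¹ : ℂ) • (e₂ * D (e₁ + e₂ + e₂) + e₂ * D (e₁ + e₂ + e₂) * e₁
      + D (e₁ + e₂ + e₂) * e₂ + e₁ * D (e₁ + e₂ + e₂) * e₂) := by
  obtain ⟨hadd, _, hmul⟩ := hD
  set a := D e₁ with ha_def
  set b := D e₂ with hb_def
  have hD0 : D 0 = 0 := by
    have h := hadd 0 0
    rw [add_zero] at h
    exact (left_eq_add.mp h)
  have ha : a = a * e₁ + e₁ * a := by
    have h := hmul e₁ e₁; rw [h1] at h; exact h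
  have hb : b = b * e₂ + e₂ * b := by
    have h := hmul e₂ e₂; rw [h2] at h; exact h
  have h3 : e₁ * b = -(a * e₂) := by
    have h := hmul e₁ e₂; rw [h12, hD0] at h
    exact eq_neg_of_add_eq_zero_right h.symm
  have h4 : b * e₁ = -(e₂ * a) := by
    have h := hmul e₂ e₁; rw [h21, hD0] at h
    exact eq_neg_of_add_eq_zero_left h.symm
  have h3' : a * e₂ = -(e₁ * b) := by rw [h3, neg_neg]
  have h4' : e₂ * a = -(b * e₁) := by rw [h4, neg_neg]
  have hw : D (e₁ + e₂ + e₂) = a + b + b := by rw [hadd, hadd]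
  have hA : a * e₂ = e₁ * (a * e₂) := by
    calc a * e₂ = (a * e₁ + e₁ * a) * e₂ := by rw [← ha]
      _ = a * (e₁ * e₂) + e₁ * (a * e₂) := by rw [add_mul, mul_assoc, mul_assoc]
      _ = e₁ * (a * e₂) := by rw [h12, mul_zero, zero_add]
  have hB : e₂ * a = e₂ * a * e₁ := by
    calc e₂ * a = e₂ * (a * e₁ + e₁ * a) := by rw [← ha]
      _ = e₂ * a * e₁ + e₂ * e₁ * a := by
          rw [mul_add, ← mul_assoc, ← mul_assoc]
      _ = e₂ * a * e₁ := by rw [h21, zero_mul, add_zero]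
  have U1 : e₂ * D (e₁ + e₂ + e₂) = -(b * e₁) + e₂ * b + e₂ * b := by
    rw [hw, mul_add, mul_add, h4']
  have U2 : D (e₁ + e₂ + e₂) * e₂ = -(e₁ * b) + b * e₂ + b * e₂ := by
    rw [hw, add_mul, add_mul, h3']
  have U3 : e₁ * D (e₁ + e₂ + e₂) * e₂ = e₁ * b := by
    have hU : e₁ * D (e₁ + e₂ + e₂) * e₂ = -(a * e₂) := by
      have U1' : e₁ * D (e₁ + e₂ + e₂) = e₁ * a + -(a * e₂) + -(a * e₂) := by
        rw [hw, mul_add, mul_add, h3]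
      rw [U1', add_mul, add_mul, mul_assoc e₁ a e₂, ← hA]
      simp only [neg_mul]
      rw [mul_assoc a e₂ e₂, h2]
      abel
    rw [hU, ← h3]
  have U4 : e₂ * D (e₁ + e₂ + e₂) * e₁ = b * e₁ := by
    have hU : e₂ * D (e₁ + e₂ + e₂) * e₁ = -(e₂ * a) := by
      rw [hw, mul_add, mul_add, add_mul, add_mul, mul_assoc e₂ b e₁, h4,
        mul_neg, ← mul_assoc, h2, ← hB]
      abel
    rw [hU, ← h4]
  rw [U3, U4, U1, U2]
  have hbb : -(b * e₁) + e₂ * b + e₂ * b + b * e₁ + (-(e₁ * b) + b * e₂ + b * e₂)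
      + e₁ * b = (b * e₂ + e₂ * b) + (b * e₂ + e₂ * b) := by abel
  rw [hbb, ← hb, ← two_smul ℂ b, smul_smul]
  norm_num

end Aux

theorem functional_comp_twoLocalDerivation_is_signed_measure
    {A : Type*} [NormedRing A] [StarRing A] [CStarRing A] [CompleteSpace A]
    [NormedAlgebra ℂ A] [StarModule ℂ A]
    (Δ : A → A) (hΔ : Is2LocalDerivation Δ) (f : A →L[ℂ] ℂ)
    (e₁ e₂ : A) (h₁ : IsIdempotentElem e₁ ∧ star e₁ = e₁)
    (h₂ : IsIdempotentElem e₂ ∧ star e₂ = e₂) (horth : e₁ * e₂ = 0) :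
    f (Δ (e₁ + e₂)) = f (Δ e₁) + f (Δ e₂) := by
  have h1 : e₁ * e₁ = e₁ := h₁.1
  have h2 : e₂ * e₂ = e₂ := h₂.1
  have h21 : e₂ * e₁ = 0 := by
    have h := congrArg star horth
    rwa [star_mul, h₁.2, h₂.2, star_zero] at h
  obtain ⟨D₀, hD₀, hu0, hv0⟩ := hΔ (e₁ + e₂) (e₁ + e₂ + e₂)
  obtain ⟨D₁, hD₁, he1, hv1⟩ := hΔ e₁ (e₁ + e₂ + e₂)
  obtain ⟨D₂, hD₂, he2, hv2⟩ := hΔ e₂ (e₁ + e₂ + e₂)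
  have key : Δ (e₁ + e₂) = Δ e₁ + Δ e₂ := by
    have k0a := deriv_e1_eq D₀ hD₀ e₁ e₂ h1 h2 horth h21
    have k0b := deriv_e2_eq D₀ hD₀ e₁ e₂ h1 h2 horth h21
    have k1 := deriv_e1_eq D₁ hD₁ e₁ e₂ h1 h2 horth h21
    have k2 := deriv_e2_eq D₂ hD₂ e₁ e₂ h1 h2 horth h21
    have hsplit : Δ (e₁ + e₂) = D₀ e₁ + D₀ e₂ := by
      rw [hu0, hD₀.1]
    rw [hsplit, k0a, k0b, ← hv0, he1, k1, ← hv1, he2, k2, ← hv2]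
  rw [key, map_add]
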